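/- Let 𝒬 be a finite set of pairwise coprime positive integers, let q ≥ 2 be an integer such that q ∣ ∏_{m∈S} m for some S ⊆ 𝒬, and set d = min{|S| : S ⊆ 𝒬 and q ∣ ∏_{m∈S} m}. Let a be an integer with 1 ≤ a < q and gcd(a, q) = 1. Then there exist a set S ⊆ 𝒬 with |S| = d and an integer b with 1 ≤ b < R_S := ∏_{m∈S} m such that a/q = b/R_S and m ∤ b for every m ∈ S. -/
import Mathlib


/-- Let `𝒬` be a finite set of pairwise coprime positive integers,
let `q ≥ 2` divide `∏_{m ∈ S} m` for some `S ⊆ 𝒬`, and let `d` be the minimal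
cardinality of such an `S`. If `1 ≤ a < q` and `gcd(a,q) = 1`, then there exist
`S ⊆ 𝒬` with `|S| = d` and `1 ≤ b < R_S := ∏_{m ∈ S} m` such that `a/q = b/R_S`
and `m ∤ b` for every `m ∈ S`. -/
theorem stmt19 (Q : Finset ℕ) (hpos : ∀ q ∈ Q, 0 < q)
    (hcop : ∀ q ∈ Q, ∀ q' ∈ Q, q ≠ q' → Nat.Coprime q q')
    (q : ℕ) (hq : 2 ≤ q) (hdvd : ∃ S ⊆ Q, q ∣ ∏ m ∈ S, m)
    (d : ℕ) (hd : d = sInf {n : ℕ | ∃ S ⊆ Q, S.card = n ∧ q ∣ ∏ m ∈ S, m})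
    (a : ℕ) (ha1 : 1 ≤ a) (ha2 : a < q) (ha3 : Nat.gcd a q = 1) :
    ∃ S ⊆ Q, S.card = d ∧ ∃ b : ℕ, 1 ≤ b ∧ b < ∏ m ∈ S, m ∧
      a * (∏ m ∈ S, m) = b * q ∧ ∀ m ∈ S, ¬ m ∣ b := by
  set T : Set ℕ := {n : ℕ | ∃ S ⊆ Q, S.card = n ∧ q ∣ ∏ m ∈ S, m} with hT
  have hne : T.Nonempty := by
    obtain ⟨S, hSQ, hS⟩ := hdvd
    exact ⟨S.card, S, hSQ, rfl, hS⟩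
  have hdT : d ∈ T := hd ▸ Nat.sInf_mem hne
  obtain ⟨S, hSQ, hcard, hqR⟩ := hdT
  have hq0 : 0 < q := by omega
  have hR0 : 0 < ∏ m ∈ S, m := Finset.prod_pos fun m hm => hpos m (hSQ hm)
  set R := ∏ m ∈ S, m with hRdef
  have hqaR : q ∣ a * R := Dvd.dvd.mul_left hqR a
  refine ⟨S, hSQ, hcard, a * R / q, ?_, ?_, ?_, ?_⟩
  · have : (a * R / q) * q = a * R := Nat.div_mul_cancel hqaR
    nlinarith [Nat.le_of_dvd hR0 hqR]
  · have h1 : (a * R / q) * q = a * R := Nat.div_mul_cancel hqaR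
    have h2 : a * R < R * q := by nlinarith
    exact Nat.lt_of_mul_lt_mul_right (h1 ▸ h2)
  · exact (Nat.div_mul_cancel hqaR).symm
  · intro m hm hmb
    have hm0 : 0 < m := hpos m (hSQ hm)
    have hR' : R = m * ∏ x ∈ S.erase m, x := (Finset.mul_prod_erase S id hm).symm
    set R' := ∏ x ∈ S.erase m, x with hR'def
    obtain ⟨c, hc⟩ := hmb
    have h1 : (a * R / q) * q = a * R := Nat.div_mul_cancel hqaR
    have h2 : m * (c * q) = m * (a * R') := by
      calc m * (c * q) = (a * R / q) * q := by rw [hc]; ring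
        _ = a * R := h1
        _ = m * (a * R') := by rw [hR']; ring
    have h3 : c * q = a * R' := Nat.eq_of_mul_eq_mul_left hm0 h2
    have h4 : q ∣ a * R' := ⟨c, by rw [← h3, mul_comm]⟩
    have h5 : q ∣ R' := (Nat.Coprime.symm ha3).dvd_of_dvd_mul_left h4
    have h6 : (S.erase m).card ∈ T := ⟨S.erase m, (S.erase_subset m).trans hSQ, rfl, h5⟩
    have h7 : d ≤ (S.erase m).card := hd ▸ Nat.sInf_le h6
    have h8 : (S.erase m).card = S.card - 1 := Finset.card_erase_of_mem hm
    have h9 : 0 < S.card := Finset.card_pos.mpr ⟨m, hm⟩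
    omega
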